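/- Let G be a d-degenerate simple graph with n vertices whose maximum degree satisfies Δ(G) < (√n − 2d − 1)/2. Then Oχ(G) = ⌈√n⌉. -/

import Mathlib

/-- `G` admits two orthogonal proper colourings, each using at most `k` colours:
two proper colourings such that no two distinct vertices receive the same pair of colours. -/
def HasOrthColoring {V : Type*} (G : SimpleGraph V) (k : ℕ) : Prop :=
  ∃ c₁ c₂ : V → Fin k,
    (∀ ⦃u v⦄, G.Adj u v → c₁ u ≠ c₁ v) ∧
    (∀ ⦃u v⦄, G.Adj u v → c₂ u ≠ c₂ v) ∧
    Function.Injective fun v => (c₁ v, c₂ v)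

open Finset

lemma key_arith (k d D x y : ℕ) (hk : 2 * D + 2 * d + 2 ≤ k)
    (h2 : (k - d) * (k - d) ≤ y) (hb : x ≤ 2 * (k - 1) * D) : x < y := by
  have hdk : d ≤ k := by omega
  have h1k : 1 ≤ k := by omega
  zify [hdk] at h2
  zify [h1k] at hb
  have hk' : (2 * D + 2 * d + 2 : ℤ) ≤ (k : ℤ) := by exact_mod_cast hk
  have e : (2 * (D : ℤ)) ≤ (k : ℤ) - 2 * d - 2 := by omega
  have e2 : (0 : ℤ) ≤ (k : ℤ) - 1 := by omega
  have e3 := mul_le_mul_of_nonneg_right e e2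
  have h : (x : ℤ) < (y : ℤ) := by
    nlinarith [sq_nonneg ((d : ℤ) - 1), h2, hb, e3, hk']
  exact_mod_cast h

lemma key_construction {V : Type} [Fintype V] [DecidableEq V] (G : SimpleGraph V)
    [DecidableRel G.Adj] (k d D : ℕ) (f : V → ℕ) (hf : Function.Injective f)
    (hback : ∀ v : V, (univ.filter fun u => G.Adj v u ∧ f u < f v).card ≤ d)
    (hD : ∀ v : V, G.degree v ≤ D)
    (hcard : Fintype.card V ≤ k * k)
    (hk : 2 * D + 2 * d + 2 ≤ k) :
    ∃ c : V → Fin k × Fin k, Function.Injective c ∧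
      ∀ u v, G.Adj u v → (c u).1 ≠ (c v).1 ∧ (c u).2 ≠ (c v).2 := by
  classical
  have hk0 : 0 < k := by omega
  set rank : V → ℕ := fun v => (univ.filter fun u => f u < f v).card with hrank_def
  have hrank_lt : ∀ u v : V, f u < f v → rank u < rank v := by
    intro u v huv
    apply Finset.card_lt_card
    constructor
    · intro w hw
      simp only [mem_filter, mem_univ, true_and] at hw ⊢
      omega
    · intro hsub
      have hu : u ∈ univ.filter fun w => f w < f v := by
        simp [huv]
      have := hsub hu
      simp at this
  have hrank_iff : ∀ u v : V, rank u < rank v ↔ f u < f v := by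
    intro u v
    constructor
    · intro h
      rcases lt_trichotomy (f u) (f v) with h1 | h1 | h1
      · exact h1
      · exact absurd (hf h1) (by rintro rfl; omega)
      · exact absurd (hrank_lt _ _ h1) (by omega)
    · exact hrank_lt u v
  have hrank_inj : Function.Injective rank := by
    intro u v huv
    by_contra hne
    rcases lt_trichotomy (f u) (f v) with h1 | h1 | h1
    · have := hrank_lt _ _ h1; omega
    · exact hne (hf h1)
    · have := hrank_lt _ _ h1; omega
  suffices H : ∀ i : ℕ, ∃ c : V → Fin k × Fin k,
      (Set.InjOn c {v | rank v < i}) ∧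
      (∀ u v, G.Adj u v → rank u < i → rank v < i →
        (c u).1 ≠ (c v).1 ∧ (c u).2 ≠ (c v).2) by
    obtain ⟨c, hinj, hprop⟩ := H (Fintype.card V)
    have hr : ∀ v : V, rank v < Fintype.card V := by
      intro v
      apply Finset.card_lt_card
      constructor
      · exact Finset.subset_univ _
      · intro hsub
        have := hsub (mem_univ v)
        simp at this
    exact ⟨c, fun a b hab => hinj (hr a) (hr b) hab,
      fun u v h => hprop u v h (hr u) (hr v)⟩
  intro i
  induction i with
  | zero =>
    exact ⟨fun _ => (⟨0, hk0⟩, ⟨0, hk0⟩), by simp [Set.InjOn], by omega⟩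
  | succ i ih =>
    obtain ⟨c, hinj, hprop⟩ := ih
    by_cases hex : ∃ v₀ : V, rank v₀ = i
    swap
    · refine ⟨c, ?_, ?_⟩
      · intro u hu v hv huv
        have hu' : rank u < i := by
          rcases Nat.lt_succ_iff_lt_or_eq.mp hu with h | h
          · exact h
          · exact absurd ⟨u, h⟩ hex
        have hv' : rank v < i := by
          rcases Nat.lt_succ_iff_lt_or_eq.mp hv with h | h
          · exact h
          · exact absurd ⟨v, h⟩ hex
        exact hinj hu' hv' huv
      · intro u v hadj hu hv
        have hu' : rank u < i := by
          rcases Nat.lt_succ_iff_lt_or_eq.mp hu with h | h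
          · exact h
          · exact absurd ⟨u, h⟩ hex
        have hv' : rank v < i := by
          rcases Nat.lt_succ_iff_lt_or_eq.mp hv with h | h
          · exact h
          · exact absurd ⟨v, h⟩ hex
        exact hprop u v hadj hu' hv'
    obtain ⟨v₀, hv₀⟩ := hex
    -- uniqueness: any vertex with rank < i+1 distinct from v₀ has rank < i
    have hlt : ∀ u : V, rank u < i + 1 → u ≠ v₀ → rank u < i := by
      intro u hu hne
      rcases Nat.lt_succ_iff_lt_or_eq.mp hu with h | h
      · exact h
      · exact absurd (hrank_inj (h.trans hv₀.symm)) hne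
    set colored : Finset V := univ.filter fun v => rank v < i with hcolored_def
    have hv₀c : v₀ ∉ colored := by simp [hcolored_def, hv₀]
    have hmemc : ∀ v : V, v ∈ colored ↔ rank v < i := by
      intro v; simp [hcolored_def]
    set B : Finset V := univ.filter (fun u => G.Adj v₀ u ∧ rank u < i) with hB_def
    have hBd : B.card ≤ d := by
      have : B = univ.filter fun u => G.Adj v₀ u ∧ f u < f v₀ := by
        ext u
        have h := hrank_iff u v₀
        rw [hv₀] at h
        simp only [hB_def, mem_filter, mem_univ, true_and]
        tauto
      rw [this]; exact hback v₀
    set R : Finset (Fin k) := B.image fun u => (c u).1 with hR_def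
    set S : Finset (Fin k) := B.image fun u => (c u).2 with hS_def
    have hRd : R.card ≤ d := le_trans (Finset.card_image_le) hBd
    have hSd : S.card ≤ d := le_trans (Finset.card_image_le) hBd
    set used : Finset (Fin k × Fin k) := colored.image c with hused_def
    set safe : Finset (Fin k × Fin k) := Rᶜ ×ˢ Sᶜ with hsafe_def
    have hsafe_mem : ∀ p : Fin k × Fin k, p ∈ safe ↔ p.1 ∉ R ∧ p.2 ∉ S := by
      intro p; simp [hsafe_def]
    -- membership of back-neighbour colours
    have hBR : ∀ u : V, G.Adj v₀ u → rank u < i → (c u).1 ∈ R ∧ (c u).2 ∈ S := by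
      intro u h1 h2
      have hu : u ∈ B := by simp [hB_def, h1, h2]
      exact ⟨Finset.mem_image_of_mem _ hu, Finset.mem_image_of_mem _ hu⟩
    by_cases hA : ∃ p ∈ safe, p ∉ used
    · -- greedy case
      obtain ⟨p, hpsafe, hpused⟩ := hA
      refine ⟨Function.update c v₀ p, ?_, ?_⟩
      · intro u hu v hv huv
        simp only [Set.mem_setOf_eq] at hu hv
        by_cases h1 : u = v₀ <;> by_cases h2 : v = v₀
        · rw [h1, h2]
        · exfalso
          rw [h1, Function.update_self, Function.update_of_ne h2] at huv
          exact hpused (huv ▸ Finset.mem_image_of_mem c ((hmemc v).mpr (hlt v hv h2)))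
        · exfalso
          rw [h2, Function.update_self, Function.update_of_ne h1] at huv
          exact hpused (huv ▸ Finset.mem_image_of_mem c ((hmemc u).mpr (hlt u hu h1)))
        · rw [Function.update_of_ne h1, Function.update_of_ne h2] at huv
          exact hinj (hlt u hu h1) (hlt v hv h2) huv
      · intro u v hadj hu hv
        by_cases h1 : u = v₀ <;> by_cases h2 : v = v₀
        · exact absurd (h1 ▸ h2 ▸ hadj) (G.irrefl)
        · subst h1
          rw [Function.update_self, Function.update_of_ne h2]
          have hvB := hBR v hadj (hlt v hv h2)
          rw [hsafe_mem] at hpsafe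
          exact ⟨fun h => hpsafe.1 (h ▸ hvB.1), fun h => hpsafe.2 (h ▸ hvB.2)⟩
        · subst h2
          rw [Function.update_self, Function.update_of_ne h1]
          have huB := hBR u (hadj.symm) (hlt u hu h1)
          rw [hsafe_mem] at hpsafe
          exact ⟨fun h => hpsafe.1 (h.symm ▸ huB.1), fun h => hpsafe.2 (h.symm ▸ huB.2)⟩
        · rw [Function.update_of_ne h1, Function.update_of_ne h2]
          exact hprop u v hadj (hlt u hu h1) (hlt v hv h2)
    · -- swap case
      push_neg at hA
      -- hA : ∀ p ∈ safe, p ∈ used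
      have hinjc : Set.InjOn c ↑colored := by
        intro x hx y hy hxy
        exact hinj ((hmemc x).mp (by exact_mod_cast hx)) ((hmemc y).mp (by exact_mod_cast hy)) hxy
      have hcard_used : used.card = colored.card := Finset.card_image_of_injOn hinjc
      have hcolored_lt : colored.card < Fintype.card V := by
        apply Finset.card_lt_card
        exact ⟨Finset.subset_univ _, fun h => hv₀c (h (mem_univ v₀))⟩
      have hused_lt : used.card < k * k := by
        have := hcard
        omega
      -- find an unused pair ab
      have hcompl : (usedᶜ : Finset (Fin k × Fin k)).Nonempty := by
        apply Finset.card_pos.mp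
        rw [Finset.card_compl]
        have hcards : Fintype.card (Fin k × Fin k) = k * k := by simp
        omega
      obtain ⟨ab, hab'⟩ := hcompl
      have hab : ab ∉ used := by simpa using hab'
      set W : Finset V := colored.filter (fun w => c w ∈ safe) with hW_def
      have hWsafe : safe.card ≤ W.card := by
        have hsub : safe ⊆ W.image c := by
          intro p hp
          obtain ⟨w, hw, hcw⟩ := Finset.mem_image.mp (hA p hp)
          exact Finset.mem_image.mpr ⟨w, by simp [hW_def, hw, hcw ▸ hp], hcw⟩
        calc safe.card ≤ (W.image c).card := Finset.card_le_card hsub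
          _ ≤ W.card := Finset.card_image_le
      have hsafecard : safe.card = (k - R.card) * (k - S.card) := by
        rw [hsafe_def, Finset.card_product, Finset.card_compl, Finset.card_compl]
        simp
      have hsafe_ge : (k - d) * (k - d) ≤ safe.card := by
        rw [hsafecard]
        exact Nat.mul_le_mul (Nat.sub_le_sub_left hRd k) (Nat.sub_le_sub_left hSd k)
      -- the set of coloured vertices whose pair lies in row ab.1 or column ab.2
      set U1 : Finset V := colored.filter (fun u => (c u).1 = ab.1) with hU1_def
      set U2 : Finset V := colored.filter (fun u => (c u).2 = ab.2) with hU2_def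
      have hU1card : U1.card ≤ k - 1 := by
        have himg : U1.image c ⊆ (({ab.1} : Finset (Fin k)) ×ˢ univ).erase ab := by
          intro p hp
          obtain ⟨u, hu, rfl⟩ := Finset.mem_image.mp hp
          have hu' := Finset.mem_filter.mp hu
          refine Finset.mem_erase.mpr ⟨?_, ?_⟩
          · rintro rfl
            exact hab (Finset.mem_image_of_mem c hu'.1)
          · simp only [Finset.mem_product, Finset.mem_singleton, Finset.mem_univ, and_true]
            exact hu'.2
        have h1 : U1.card = (U1.image c).card := by
          rw [Finset.card_image_of_injOn]
          intro x hx y hy hxy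
          exact hinjc (Finset.mem_coe.mpr (Finset.mem_filter.mp hx).1)
            (Finset.mem_coe.mpr (Finset.mem_filter.mp hy).1) hxy
        have h2 : ((({ab.1} : Finset (Fin k)) ×ˢ univ).erase ab).card = k - 1 := by
          rw [Finset.card_erase_of_mem (by simp)]
          simp
        rw [h1, ← h2]
        exact Finset.card_le_card himg
      have hU2card : U2.card ≤ k - 1 := by
        have himg : U2.image c ⊆ ((univ : Finset (Fin k)) ×ˢ ({ab.2} : Finset (Fin k))).erase ab := by
          intro p hp
          obtain ⟨u, hu, rfl⟩ := Finset.mem_image.mp hp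
          have hu' := Finset.mem_filter.mp hu
          refine Finset.mem_erase.mpr ⟨?_, ?_⟩
          · rintro rfl
            exact hab (Finset.mem_image_of_mem c hu'.1)
          · simp only [Finset.mem_product, Finset.mem_singleton, Finset.mem_univ, true_and]
            exact hu'.2
        have h1 : U2.card = (U2.image c).card := by
          rw [Finset.card_image_of_injOn]
          intro x hx y hy hxy
          exact hinjc (Finset.mem_coe.mpr (Finset.mem_filter.mp hx).1)
            (Finset.mem_coe.mpr (Finset.mem_filter.mp hy).1) hxy
        have h2 : (((univ : Finset (Fin k)) ×ˢ ({ab.2} : Finset (Fin k))).erase ab).card = k - 1 := by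
          rw [Finset.card_erase_of_mem (by simp)]
          simp
        rw [h1, ← h2]
        exact Finset.card_le_card himg
      set bad : Finset V := (U1 ∪ U2).biUnion (fun u => G.neighborFinset u) with hbad_def
      have hbadcard : bad.card ≤ (U1.card + U2.card) * D := by
        calc bad.card ≤ ∑ u ∈ (U1 ∪ U2), (G.neighborFinset u).card :=
              Finset.card_biUnion_le
          _ ≤ ∑ _u ∈ (U1 ∪ U2), D := Finset.sum_le_sum (fun u _ => hD u)
          _ = (U1 ∪ U2).card * D := by rw [Finset.sum_const, smul_eq_mul]
          _ ≤ (U1.card + U2.card) * D := Nat.mul_le_mul_right D (Finset.card_union_le _ _)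
      -- numeric inequality: bad.card < W.card
      have hnum : bad.card < W.card :=
        key_arith k d D bad.card W.card hk (le_trans hsafe_ge hWsafe)
          (le_trans hbadcard (Nat.mul_le_mul_right D (by omega)))
      -- choose a good vertex w
      have hWbad : (W \ bad).Nonempty := by
        apply Finset.card_pos.mp
        have := Finset.le_card_sdiff bad W
        omega
      obtain ⟨w, hw⟩ := hWbad
      have hwW : w ∈ W := (Finset.mem_sdiff.mp hw).1
      have hwbad : w ∉ bad := (Finset.mem_sdiff.mp hw).2
      have hwc : w ∈ colored := (Finset.mem_filter.mp hwW).1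
      have hwsafe : c w ∈ safe := (Finset.mem_filter.mp hwW).2
      have hwrank : rank w < i := (hmemc w).mp hwc
      have hwv₀ : w ≠ v₀ := by
        rintro rfl; omega
      have hnadj : ¬ G.Adj v₀ w := by
        intro h
        exact ((hsafe_mem _).mp hwsafe).1 ((hBR w h hwrank).1)
      have hwgood : ∀ u : V, rank u < i → ((c u).1 = ab.1 ∨ (c u).2 = ab.2) →
          ¬ G.Adj u w := by
        intro u h1 h2 hadj
        apply hwbad
        apply Finset.mem_biUnion.mpr
        refine ⟨u, ?_, (SimpleGraph.mem_neighborFinset G u w).mpr hadj⟩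
        rcases h2 with h2 | h2
        · exact Finset.mem_union_left _ (Finset.mem_filter.mpr ⟨(hmemc u).mpr h1, h2⟩)
        · exact Finset.mem_union_right _ (Finset.mem_filter.mpr ⟨(hmemc u).mpr h1, h2⟩)
      have hcwused : c w ∈ used := Finset.mem_image_of_mem c hwc
      -- new colouring
      set c' : V → Fin k × Fin k := fun x => if x = v₀ then c w else if x = w then ab else c x
        with hc'_def
      have hc'v₀ : c' v₀ = c w := by simp [hc'_def]
      have hc'w : c' w = ab := by simp [hc'_def, hwv₀]
      have hc'other : ∀ x : V, x ≠ v₀ → x ≠ w → c' x = c x := by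
        intro x h1 h2; simp [hc'_def, h1, h2]
      refine ⟨c', ?_, ?_⟩
      · intro x hx y hy hxy
        simp only [Set.mem_setOf_eq] at hx hy
        by_cases hx1 : x = v₀ <;> by_cases hy1 : y = v₀
        · rw [hx1, hy1]
        · by_cases hy2 : y = w
          · exfalso
            rw [hx1, hc'v₀, hy2, hc'w] at hxy
            exact hab (hxy ▸ hcwused)
          · exfalso
            rw [hx1, hc'v₀, hc'other y hy1 hy2] at hxy
            have : w = y := hinjc (Finset.mem_coe.mpr hwc)
              (Finset.mem_coe.mpr ((hmemc y).mpr (hlt y hy hy1))) hxy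
            exact hy2 this.symm
        · by_cases hx2 : x = w
          · exfalso
            rw [hy1, hc'v₀, hx2, hc'w] at hxy
            exact hab (hxy ▸ hcwused)
          · exfalso
            rw [hy1, hc'v₀, hc'other x hx1 hx2] at hxy
            have : x = w := hinjc (Finset.mem_coe.mpr ((hmemc x).mpr (hlt x hx hx1)))
              (Finset.mem_coe.mpr hwc) hxy
            exact hx2 this
        · by_cases hx2 : x = w <;> by_cases hy2 : y = w
          · rw [hx2, hy2]
          · exfalso
            rw [hx2, hc'w, hc'other y hy1 hy2] at hxy
            exact hab (hxy ▸ Finset.mem_image_of_mem c ((hmemc y).mpr (hlt y hy hy1)))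
          · exfalso
            rw [hy2, hc'w, hc'other x hx1 hx2] at hxy
            exact hab (hxy.symm ▸ Finset.mem_image_of_mem c ((hmemc x).mpr (hlt x hx hx1)))
          · rw [hc'other x hx1 hx2, hc'other y hy1 hy2] at hxy
            exact hinj (hlt x hx hx1) (hlt y hy hy1) hxy
      · intro u v hadj hu hv
        by_cases hu1 : u = v₀ <;> by_cases hv1 : v = v₀
        · exact absurd (hu1 ▸ hv1 ▸ hadj) (G.irrefl)
        · subst hu1
          by_cases hv2 : v = w
          · exact absurd (hv2 ▸ hadj) hnadj
          · rw [hc'v₀, hc'other v hv1 hv2]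
            have hvB := hBR v hadj (hlt v hv hv1)
            have hs := (hsafe_mem _).mp hwsafe
            exact ⟨fun h => hs.1 (h ▸ hvB.1), fun h => hs.2 (h ▸ hvB.2)⟩
        · subst hv1
          by_cases hu2 : u = w
          · exact absurd (hu2 ▸ (hadj.symm)) hnadj
          · rw [hc'v₀, hc'other u hu1 hu2]
            have huB := hBR u (hadj.symm) (hlt u hu hu1)
            have hs := (hsafe_mem _).mp hwsafe
            exact ⟨fun h => hs.1 (h.symm ▸ huB.1), fun h => hs.2 (h.symm ▸ huB.2)⟩
        · by_cases hu2 : u = w <;> by_cases hv2 : v = w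
          · exact absurd (hu2 ▸ hv2 ▸ hadj) (G.irrefl)
          · subst hu2
            rw [hc'w, hc'other v hv1 hv2]
            constructor
            · intro h
              exact hwgood v (hlt v hv hv1) (Or.inl h.symm) (hadj.symm)
            · intro h
              exact hwgood v (hlt v hv hv1) (Or.inr h.symm) (hadj.symm)
          · subst hv2
            rw [hc'w, hc'other u hu1 hu2]
            constructor
            · intro h
              exact hwgood u (hlt u hu hu1) (Or.inl h) hadj
            · intro h
              exact hwgood u (hlt u hu hu1) (Or.inr h) hadj
          · rw [hc'other u hu1 hu2, hc'other v hv1 hv2]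
            exact hprop u v hadj (hlt u hu hu1) (hlt v hv hv1)

/-- If `G` is a `d`-degenerate graph with `n` vertices (there is an ordering of the
vertices in which every vertex has at most `d` earlier neighbours) whose maximum degree
satisfies `Δ(G) < (√n - 2d - 1)/2`, then `Oχ(G) = ⌈√n⌉`. -/
theorem orthChromatic_of_degenerate {V : Type} (G : SimpleGraph V) (n d : ℕ)
    (hn : Nat.card V = n)
    (hdegen : ∃ f : V → ℕ, Function.Injective f ∧
      ∀ v : V, {u : V | G.Adj v u ∧ f u < f v}.ncard ≤ d)
    (hdeg : ∀ v : V, ((G.neighborSet v).ncard : ℝ) < (Real.sqrt n - 2 * d - 1) / 2) :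
    IsLeast {k | HasOrthColoring G k} ⌈Real.sqrt n⌉₊ := by
  classical
  constructor
  · -- membership: the orthogonal colouring exists
    by_cases hV : IsEmpty V
    · refine ⟨fun v => isEmptyElim v, fun v => isEmptyElim v, ?_, ?_, ?_⟩
      · intro u; exact isEmptyElim u
      · intro u; exact isEmptyElim u
      · intro a; exact isEmptyElim a
    · have hne : Nonempty V := not_isEmpty_iff.mp hV
      obtain ⟨v⟩ := id hne
      have h0 : (0:ℝ) ≤ ((G.neighborSet v).ncard : ℝ) := Nat.cast_nonneg _
      have hsq : (2*(d:ℝ)+1) < Real.sqrt n := by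
        have := hdeg v; linarith
      have hnpos : 0 < n := by
        by_contra h
        have hn0 : n = 0 := by omega
        rw [hn0] at hsq
        simp [Real.sqrt_zero] at hsq
        have : (0:ℝ) ≤ 2*(d:ℝ) := by positivity
        linarith
      have hfin : Finite V := by
        by_contra h
        rw [not_finite_iff_infinite] at h
        rw [@Nat.card_eq_zero_of_infinite V h] at hn
        omega
      letI := Fintype.ofFinite V
      letI : DecidableRel G.Adj := Classical.decRel _
      have hcardV : Fintype.card V = n := by rw [← Nat.card_eq_fintype_card, hn]
      set k := ⌈Real.sqrt n⌉₊ with hk_def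
      have hsqk : Real.sqrt n ≤ (k:ℝ) := Nat.le_ceil _
      have hnk : n ≤ k * k := by
        have h1 : (n:ℝ) ≤ (k:ℝ)*(k:ℝ) := by
          nlinarith [Real.sq_sqrt (by positivity : (0:ℝ) ≤ (n:ℝ)), Real.sqrt_nonneg (n:ℝ)]
        exact_mod_cast h1
      set D := Finset.univ.sup (fun v => G.degree v) with hD_def
      have hDle : ∀ v : V, G.degree v ≤ D := fun v => Finset.le_sup (f := fun v => G.degree v) (Finset.mem_univ v)
      have hnc : ∀ v : V, (G.neighborSet v).ncard = G.degree v := by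
        intro v
        rw [← Nat.card_coe_set_eq, Nat.card_eq_fintype_card,
          SimpleGraph.card_neighborSet_eq_degree]
      have hDlt : (D:ℝ) < (Real.sqrt n - 2*d - 1)/2 := by
        obtain ⟨w, _, hw⟩ := Finset.exists_mem_eq_sup Finset.univ
          (Finset.univ_nonempty (α := V)) (fun v => G.degree v)
        have := hdeg w
        rw [hnc w] at this
        rw [hD_def, hw]
        exact this
      have hkD : 2*D + 2*d + 2 ≤ k := by
        have h1 : (2*(D:ℝ) + 2*d + 1 : ℝ) < (k:ℝ) := by linarith
        have h2 : 2*D + 2*d + 1 < k := by exact_mod_cast h1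
        omega
      obtain ⟨f, hf, hfd⟩ := hdegen
      have hback : ∀ v : V, (Finset.univ.filter fun u => G.Adj v u ∧ f u < f v).card ≤ d := by
        intro v
        have := hfd v
        rwa [Set.ncard_eq_toFinset_card', Set.toFinset_setOf] at this
      obtain ⟨c, hcinj, hcprop⟩ := key_construction G k d D f hf hback hDle
        (hcardV ▸ hnk) hkD
      exact ⟨fun v => (c v).1, fun v => (c v).2,
        fun u v h => (hcprop u v h).1, fun u v h => (hcprop u v h).2,
        fun x y hxy => hcinj hxy⟩
  · -- lower bound
    rintro k' ⟨c₁, c₂, -, -, hinj⟩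
    have h1 : Nat.card V ≤ Nat.card (Fin k' × Fin k') :=
      Nat.card_le_card_of_injective _ hinj
    have h2 : n ≤ k' * k' := by
      rw [hn] at h1
      simpa [Nat.card_eq_fintype_card] using h1
    apply Nat.ceil_le.mpr
    have h3 : (n:ℝ) ≤ ((k':ℝ))^2 := by
      have : (n:ℝ) ≤ (k':ℝ) * (k':ℝ) := by exact_mod_cast h2
      nlinarith
    calc Real.sqrt n ≤ Real.sqrt ((k':ℝ)^2) := Real.sqrt_le_sqrt h3
      _ = (k':ℝ) := Real.sqrt_sq (by positivity)
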